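/- Negativity of the initial slope of the first Riemann invariant (Lemma 3.3). Let ρ₀, c₀ : ℝ → ℝ with ρ₀ differentiable at x₀, c₀ twice differentiable at x₀, ρ₀(x₀) > 0 and c₀(x₀) > 0, and suppose ∂ₓρ₀(x₀) ≤ 0 and c₀(x₀) ∂ₓₓc₀(x₀) < (∂ₓc₀(x₀))². Set q₀ := ∂ₓc₀ / c₀ and z₀ := (ρ₀(x₀), q₀(x₀)) ∈ Ω. Let w₁ : Ω → ℝ be differentiable at z₀ with ∂w₁/∂z₁(z₀) > 0 and ∇w₁(z₀) · r₁(z₀) = 0. Then the function P₀(x) := w₁(ρ₀(x), q₀(x)) satisfies ∂ₓP₀(x₀) < 0. -/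

import Mathlib

/-- The half-plane `Ω = {(z₁,z₂) ∈ ℝ² : z₁ > 0}`. -/
def Omega : Set (ℝ × ℝ) := {z : ℝ × ℝ | 0 < z.1}

/-- The eigenvalue `λ₁(z₁,z₂) = (z₂ − √(z₂² + 4z₁))/2` of `[[z₂, z₁],[1,0]]`. -/
noncomputable def lam1 (z : ℝ × ℝ) : ℝ := (z.2 - Real.sqrt (z.2 ^ 2 + 4 * z.1)) / 2

/-- **Lemma 3.3** (Negativity of the initial slope of the first Riemann invariant). If
`∂ₓρ₀(x₀) ≤ 0` and `c₀(x₀)∂ₓₓc₀(x₀) < (∂ₓc₀(x₀))²`, then `P₀ := w₁(ρ₀, ∂ₓc₀/c₀)` satisfies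
`∂ₓP₀(x₀) < 0`. -/
theorem initial_slope_riemann_invariant_neg
    (ρ₀ c₀ : ℝ → ℝ) (x₀ : ℝ)
    (hρ₀diff : DifferentiableAt ℝ ρ₀ x₀)
    (hc₀diff : DifferentiableAt ℝ c₀ x₀)
    (hc₀diff2 : DifferentiableAt ℝ (deriv c₀) x₀)
    (hρ₀pos : 0 < ρ₀ x₀) (hc₀pos : 0 < c₀ x₀)
    (hslope : deriv ρ₀ x₀ ≤ 0)
    (hconc : c₀ x₀ * deriv (deriv c₀) x₀ < (deriv c₀ x₀) ^ 2)
    (w₁ : ℝ × ℝ → ℝ)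
    (hw₁diff : DifferentiableAt ℝ w₁ (ρ₀ x₀, deriv c₀ x₀ / c₀ x₀))
    (hw₁pos : 0 < fderiv ℝ w₁ (ρ₀ x₀, deriv c₀ x₀ / c₀ x₀) ((1 : ℝ), (0 : ℝ)))
    (hw₁r₁ : fderiv ℝ w₁ (ρ₀ x₀, deriv c₀ x₀ / c₀ x₀)
      (lam1 (ρ₀ x₀, deriv c₀ x₀ / c₀ x₀), 1) = 0) :
    deriv (fun x => w₁ (ρ₀ x, deriv c₀ x / c₀ x)) x₀ < 0 := by
  have hc₀ne : c₀ x₀ ≠ 0 := ne_of_gt hc₀pos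
  set ρ' := deriv ρ₀ x₀
  set q' := (deriv (deriv c₀) x₀ * c₀ x₀ - deriv c₀ x₀ * deriv c₀ x₀) / c₀ x₀ ^ 2 with hq'def
  set A := fderiv ℝ w₁ (ρ₀ x₀, deriv c₀ x₀ / c₀ x₀) with hA
  have hq : HasDerivAt (fun x => deriv c₀ x / c₀ x) q' x₀ :=
    hc₀diff2.hasDerivAt.div hc₀diff.hasDerivAt hc₀ne
  have hpair : HasDerivAt (fun x => (ρ₀ x, deriv c₀ x / c₀ x)) (ρ', q') x₀ :=
    HasDerivAt.prodMk hρ₀diff.hasDerivAt hq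
  have hcomp : HasDerivAt (fun x => w₁ (ρ₀ x, deriv c₀ x / c₀ x)) (A (ρ', q')) x₀ :=
    hw₁diff.hasFDerivAt.comp_hasDerivAt x₀ hpair
  rw [hcomp.deriv]
  -- decompose the vector
  have hvec : ((ρ', q') : ℝ × ℝ) = ρ' • ((1 : ℝ), (0 : ℝ)) + q' • ((0 : ℝ), (1 : ℝ)) := by
    simp [Prod.ext_iff]
  set l := lam1 (ρ₀ x₀, deriv c₀ x₀ / c₀ x₀) with hl
  have hvec2 : ((l, 1) : ℝ × ℝ) = l • ((1 : ℝ), (0 : ℝ)) + ((0 : ℝ), (1 : ℝ)) := by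
    simp [Prod.ext_iff]
  have hA01 : A ((0 : ℝ), (1 : ℝ)) = -l * A ((1 : ℝ), (0 : ℝ)) := by
    have := hw₁r₁
    rw [hvec2, map_add, map_smul, smul_eq_mul] at this
    linarith
  have hAval : A (ρ', q') = ρ' * A ((1 : ℝ), (0 : ℝ)) + q' * A ((0 : ℝ), (1 : ℝ)) := by
    rw [hvec, map_add, map_smul, map_smul, smul_eq_mul, smul_eq_mul]
  -- signs
  have hlneg : l < 0 := by
    have h1 : (deriv c₀ x₀ / c₀ x₀) ^ 2 < (deriv c₀ x₀ / c₀ x₀) ^ 2 + 4 * ρ₀ x₀ := by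
      linarith
    have h2 : deriv c₀ x₀ / c₀ x₀ <
        Real.sqrt ((deriv c₀ x₀ / c₀ x₀) ^ 2 + 4 * ρ₀ x₀) := by
      calc deriv c₀ x₀ / c₀ x₀ ≤ |deriv c₀ x₀ / c₀ x₀| := le_abs_self _
        _ = Real.sqrt ((deriv c₀ x₀ / c₀ x₀) ^ 2) := (Real.sqrt_sq_eq_abs _).symm
        _ < _ := Real.sqrt_lt_sqrt (sq_nonneg _) h1
    simp only [hl, lam1]
    linarith
  have hq'neg : q' < 0 := by
    apply div_neg_of_neg_of_pos
    · nlinarith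
    · positivity
  rw [hAval, hA01]
  nlinarith [mul_nonpos_of_nonpos_of_nonneg hslope (le_of_lt hw₁pos),
    mul_pos (mul_pos_of_neg_of_neg hq'neg hlneg) hw₁pos]
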